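/- Let k be a positive integer, let θ ∈ ℂ be algebraic of degree d over ℚ with 2 ≤ d < k, and let m ∈ ℤ[t] be a primitive irreducible polynomial of degree d with m(θ) = 0. Then there exists a constant C > 0 (depending on k and θ) such that the following holds: for every real X ≥ 1 and all integers x₁,…,x_k, y₁,…,y_k with 1 ≤ x_i, y_i ≤ X for all i, satisfying (x₁+θ)⋯(x_k+θ) = (y₁+θ)⋯(y_k+θ) and with x_i ≠ y_j for all pairs of indices i, j, for each index j with 1 ≤ j ≤ k there exists an integer ρ_j with 1 ≤ |ρ_j| ≤ C·X^{k−d} such that ∏_{i=1}^{k}(x_i − y_j) = ρ_j · m(−y_j). -/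

import Mathlib

open Polynomial Finset

lemma coeff_prodXC_bound (k : ℕ) (X : ℝ) (hX : 1 ≤ X) (x : Fin k → ℤ)
    (hx : ∀ i, 1 ≤ x i ∧ (x i : ℝ) ≤ X) (j : ℕ) :
    |(((∏ i, (Polynomial.X + Polynomial.C (x i))).coeff j : ℤ) : ℝ)| ≤ 2 ^ k * X ^ (k - j) := by
  have hX0 : (0:ℝ) ≤ X := le_trans zero_le_one hX
  by_cases hj : j ≤ k
  · have hcard : (Finset.univ : Finset (Fin k)).card = k := by simp
    rw [Finset.prod_X_add_C_coeff _ _ (by rw [hcard]; exact hj), hcard]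
    push_cast
    have hterm : ∀ t ∈ Finset.powersetCard (k - j) (Finset.univ : Finset (Fin k)),
        |∏ i ∈ t, ((x i : ℝ))| ≤ X ^ (k - j) := by
      intro t ht
      have hct : t.card = k - j := (Finset.mem_powersetCard.1 ht).2
      have h1 : |∏ i ∈ t, ((x i : ℝ))| = ∏ i ∈ t, |(x i : ℝ)| := Finset.abs_prod _ _
      rw [h1, ← hct]
      rw [← Finset.prod_const]
      refine Finset.prod_le_prod (fun i _ => abs_nonneg _) (fun i _ => ?_)
      have h0 : (0:ℝ) ≤ (x i : ℝ) := by exact_mod_cast le_trans zero_le_one (hx i).1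
      rw [abs_of_nonneg h0]
      exact (hx i).2
    calc |∑ t ∈ Finset.powersetCard (k - j) (Finset.univ : Finset (Fin k)), ∏ i ∈ t, ((x i : ℝ))|
        ≤ ∑ t ∈ Finset.powersetCard (k - j) (Finset.univ : Finset (Fin k)), |∏ i ∈ t, ((x i : ℝ))| :=
          Finset.abs_sum_le_sum_abs _ _
      _ ≤ ∑ _t ∈ Finset.powersetCard (k - j) (Finset.univ : Finset (Fin k)), X ^ (k - j) :=
          Finset.sum_le_sum hterm
      _ = (Nat.choose k (k - j) : ℝ) * X ^ (k - j) := by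
          rw [Finset.sum_const, Finset.card_powersetCard, hcard, nsmul_eq_mul]
      _ ≤ 2 ^ k * X ^ (k - j) := by
          refine mul_le_mul_of_nonneg_right ?_ (pow_nonneg hX0 _)
          have : Nat.choose k (k - j) ≤ 2 ^ k := by
            calc Nat.choose k (k - j) ≤ ∑ i ∈ Finset.range (k + 1), Nat.choose k i :=
                  Finset.single_le_sum (fun i _ => Nat.zero_le _)
                    (Finset.mem_range.2 (Nat.lt_succ_of_le (Nat.sub_le _ _)))
              _ = 2 ^ k := Nat.sum_range_choose k
          exact_mod_cast this
  · have hdeg : (∏ i, (Polynomial.X + Polynomial.C (x i))).natDegree < j := by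
      have h1 : (∏ i, (Polynomial.X + Polynomial.C (x i))).natDegree ≤ k := by
        refine le_trans (Polynomial.natDegree_prod_le _ _) ?_
        have : ∀ i : Fin k, (Polynomial.X + Polynomial.C (x i)).natDegree = 1 := fun i =>
          Polynomial.natDegree_X_add_C _
        rw [Finset.sum_congr rfl (fun i _ => this i)]
        simp
      omega
    rw [Polynomial.coeff_eq_zero_of_natDegree_lt hdeg]
    simp
    positivity
open Polynomial Finset

lemma quot_coeff_bound (k d : ℕ) (X B M : ℝ) (hX : 1 ≤ X) (hB : 0 ≤ B) (hM : 0 ≤ M)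
    (m g : Polynomial ℤ) (hmd : m.natDegree = d)
    (hmlc : 1 ≤ |((m.coeff d : ℤ) : ℝ)|)
    (hmc : ∀ i, |((m.coeff i : ℤ) : ℝ)| ≤ M)
    (hgd : g.natDegree < k - d)
    (hf : ∀ j, j ≤ k → |(((m * g).coeff j : ℤ) : ℝ)| ≤ B * X ^ (k - j)) :
    ∀ s, |((g.coeff s : ℤ) : ℝ)| ≤ B * (1 + k * M) ^ (k - d - s) * X ^ (k - d - s) := by
  set A : ℝ := (k : ℝ) * M with hA
  have hA0 : 0 ≤ A := mul_nonneg (Nat.cast_nonneg _) hM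
  have h1A : (1:ℝ) ≤ 1 + A := by linarith
  have hX0 : (0:ℝ) ≤ X := le_trans zero_le_one hX
  have key : ∀ r : ℕ, ∀ s : ℕ, k - d - s ≤ r →
      |((g.coeff s : ℤ) : ℝ)| ≤ B * (1 + A) ^ (k - d - s) * X ^ (k - d - s) := by
    intro r
    induction r with
    | zero =>
      intro s hs
      have hs' : k - d ≤ s := by omega
      rw [Polynomial.coeff_eq_zero_of_natDegree_lt (lt_of_lt_of_le hgd hs')]
      simp only [Int.cast_zero, abs_zero]
      positivity
    | succ r ih =>
      intro s hs
      by_cases hcase : k - d - s ≤ r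
      · exact ih s hcase
      have hr1 : k - d - s = r + 1 := by omega
      have hsk : s + 1 ≤ k - d := by omega
      have hdk : d < k := by omega
      have hsd : s + d ≤ k - 1 := by omega
      -- the coefficient identity
      have hco := Polynomial.coeff_mul m g (s + d)
      have hmem : ((d, s) : ℕ × ℕ) ∈ Finset.HasAntidiagonal.antidiagonal (s + d) := by
        simp [add_comm]
      rw [← Finset.add_sum_erase _ _ hmem] at hco
      have heq : m.coeff d * g.coeff s =
          (m * g).coeff (s + d) - ∑ p ∈ (Finset.HasAntidiagonal.antidiagonal (s + d)).erase (d, s),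
            m.coeff p.1 * g.coeff p.2 := by
        rw [hco]; ring
      -- bound the error sum
      have hterm : ∀ p ∈ (Finset.HasAntidiagonal.antidiagonal (s + d)).erase (d, s),
          |((m.coeff p.1 * g.coeff p.2 : ℤ) : ℝ)| ≤ M * (B * (1 + A) ^ r * X ^ r) := by
        intro p hp
        have hpne : p ≠ (d, s) := (Finset.mem_erase.1 hp).1
        have hpad : p.1 + p.2 = s + d := Finset.HasAntidiagonal.mem_antidiagonal.1 (Finset.mem_erase.1 hp).2
        by_cases hp1 : d < p.1
        · have : m.coeff p.1 = 0 := Polynomial.coeff_eq_zero_of_natDegree_lt (by omega)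
          rw [this]
          simp only [zero_mul, Int.cast_zero, abs_zero]
          positivity
        · have hp1d : p.1 < d := by
            rcases Nat.lt_or_ge p.1 d with h | h
            · exact h
            · exfalso; apply hpne
              have : p.1 = d := le_antisymm (not_lt.1 hp1) h
              have : p.2 = s := by omega
              exact Prod.ext (by omega) this
          have hp2 : s + 1 ≤ p.2 := by omega
          have hle : k - d - p.2 ≤ r := by omega
          have hgb := ih p.2 hle
          have hgb2 : |((g.coeff p.2 : ℤ) : ℝ)| ≤ B * (1 + A) ^ r * X ^ r := by
            refine hgb.trans ?_
            have h1 : (1 + A) ^ (k - d - p.2) ≤ (1 + A) ^ r := pow_le_pow_right₀ h1A hle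
            have h2 : X ^ (k - d - p.2) ≤ X ^ r := pow_le_pow_right₀ hX hle
            have hp2' : (0:ℝ) ≤ X ^ (k - d - p.2) := by positivity
            have hmm : (1 + A) ^ (k - d - p.2) * X ^ (k - d - p.2) ≤ (1 + A) ^ r * X ^ r :=
              mul_le_mul h1 h2 hp2' (by positivity)
            calc B * (1 + A) ^ (k - d - p.2) * X ^ (k - d - p.2)
                = B * ((1 + A) ^ (k - d - p.2) * X ^ (k - d - p.2)) := by ring
              _ ≤ B * ((1 + A) ^ r * X ^ r) := mul_le_mul_of_nonneg_left hmm hB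
              _ = B * (1 + A) ^ r * X ^ r := by ring
          rw [Int.cast_mul, abs_mul]
          exact mul_le_mul (hmc p.1) hgb2 (abs_nonneg _) hM
      have herr : |((∑ p ∈ (Finset.HasAntidiagonal.antidiagonal (s + d)).erase (d, s),
            m.coeff p.1 * g.coeff p.2 : ℤ) : ℝ)| ≤ A * (B * (1 + A) ^ r * X ^ r) := by
        push_cast
        refine le_trans (Finset.abs_sum_le_sum_abs _ _) ?_
        refine le_trans (Finset.sum_le_sum (by
          intro p hp
          have := hterm p hp
          push_cast at this ⊢
          exact this)) ?_
        rw [Finset.sum_const, nsmul_eq_mul]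
        have hcard : ((Finset.HasAntidiagonal.antidiagonal (s + d)).erase (d, s)).card ≤ k := by
          have h1 : ((Finset.HasAntidiagonal.antidiagonal (s + d)).erase (d, s)).card =
              (Finset.HasAntidiagonal.antidiagonal (s + d)).card - 1 := Finset.card_erase_of_mem hmem
          rw [h1, Finset.Nat.card_antidiagonal]
          omega
        have hpos : (0:ℝ) ≤ M * (B * (1 + A) ^ r * X ^ r) := by positivity
        calc (((Finset.HasAntidiagonal.antidiagonal (s + d)).erase (d, s)).card : ℝ) * (M * (B * (1 + A) ^ r * X ^ r))
            ≤ (k : ℝ) * (M * (B * (1 + A) ^ r * X ^ r)) := by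
              refine mul_le_mul_of_nonneg_right ?_ hpos
              exact_mod_cast hcard
          _ = A * (B * (1 + A) ^ r * X ^ r) := by rw [hA]; ring
      have hfb : |(((m * g).coeff (s + d) : ℤ) : ℝ)| ≤ B * X ^ (r + 1) := by
        have := hf (s + d) (by omega)
        have hkd : k - (s + d) = r + 1 := by omega
        rwa [hkd] at this
      have hgs : |((g.coeff s : ℤ) : ℝ)| ≤ |((m.coeff d * g.coeff s : ℤ) : ℝ)| := by
        rw [Int.cast_mul, abs_mul]
        nlinarith [abs_nonneg ((g.coeff s : ℝ))]
      have hmain : |((m.coeff d * g.coeff s : ℤ) : ℝ)| ≤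
          B * X ^ (r + 1) + A * (B * (1 + A) ^ r * X ^ r) := by
        rw [heq]
        push_cast
        push_cast at hfb herr
        calc |((m * g).coeff (s + d) : ℝ) - ∑ p ∈ (Finset.HasAntidiagonal.antidiagonal (s + d)).erase (d, s),
              ((m.coeff p.1 : ℝ) * (g.coeff p.2 : ℝ))|
            ≤ |((m * g).coeff (s + d) : ℝ)| + |∑ p ∈ (Finset.HasAntidiagonal.antidiagonal (s + d)).erase (d, s),
              ((m.coeff p.1 : ℝ) * (g.coeff p.2 : ℝ))| := abs_sub _ _
          _ ≤ B * X ^ (r + 1) + A * (B * (1 + A) ^ r * X ^ r) := add_le_add hfb herr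
      rw [hr1]
      refine le_trans (hgs.trans hmain) ?_
      have e1 : (1:ℝ) ≤ (1 + A) ^ r := one_le_pow₀ h1A
      have e2 : X ^ r ≤ X ^ (r + 1) := pow_le_pow_right₀ hX (Nat.le_succ r)
      have e3 : (0:ℝ) ≤ X ^ (r + 1) := by positivity
      have e4 : (0:ℝ) ≤ (1 + A) ^ r := by positivity
      have t1 : B * X ^ (r + 1) ≤ B * (1 + A) ^ r * X ^ (r + 1) := by
        nlinarith [mul_nonneg hB e3]
      have t2 : A * (B * (1 + A) ^ r * X ^ r) ≤ A * (B * (1 + A) ^ r * X ^ (r + 1)) := by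
        have h := mul_le_mul_of_nonneg_left e2 (mul_nonneg hB e4)
        have h2 : B * (1 + A) ^ r * X ^ r ≤ B * (1 + A) ^ r * X ^ (r + 1) := by
          calc B * (1 + A) ^ r * X ^ r = B * (1 + A) ^ r * X ^ r := rfl
            _ ≤ B * (1 + A) ^ r * X ^ (r + 1) := by nlinarith [mul_nonneg hB e4]
        exact mul_le_mul_of_nonneg_left h2 hA0
      calc B * X ^ (r + 1) + A * (B * (1 + A) ^ r * X ^ r)
          ≤ B * (1 + A) ^ r * X ^ (r + 1) + A * (B * (1 + A) ^ r * X ^ (r + 1)) := add_le_add t1 t2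
        _ = B * (1 + A) ^ (r + 1) * X ^ (r + 1) := by ring
  intro s
  exact key (k - d - s) s le_rfl

open Polynomial Finset

/-- **Lemma 3.1 (Heap–Sahay–Wooley).**
Let `θ` be algebraic of degree `d` over `ℚ` with `2 ≤ d < k`, and let `m ∈ ℤ[t]` be a
primitive irreducible polynomial of degree `d` with `m(θ) = 0`. Then there is a constant
`C > 0` such that: whenever `1 ≤ x_i, y_i ≤ X`, `(x₁+θ)⋯(x_k+θ) = (y₁+θ)⋯(y_k+θ)`, and
`x_i ≠ y_j` for all `i, j`, then for each `j` there is an integer `ρ_j` with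
`1 ≤ |ρ_j| ≤ C·X^(k−d)` and `∏_i (x_i − y_j) = ρ_j · m(−y_j)`. -/
theorem key_divisibility_lemma (k d : ℕ) (θ : ℂ)
    (hθ : IsAlgebraic ℚ θ) (hdeg : (minpoly ℚ θ).natDegree = d)
    (hd2 : 2 ≤ d) (hdk : d < k)
    (m : Polynomial ℤ) (hprim : m.IsPrimitive) (hirr : Irreducible m)
    (hmdeg : m.natDegree = d) (hroot : Polynomial.aeval θ m = 0) :
    ∃ C : ℝ, 0 < C ∧ ∀ X : ℝ, 1 ≤ X → ∀ x y : Fin k → ℤ,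
      (∀ i, 1 ≤ x i ∧ (x i : ℝ) ≤ X) → (∀ i, 1 ≤ y i ∧ (y i : ℝ) ≤ X) →
      (∏ i, ((x i : ℂ) + θ) = ∏ i, ((y i : ℂ) + θ)) →
      (∀ i j, x i ≠ y j) →
      ∀ j : Fin k, ∃ ρ : ℤ, 1 ≤ |ρ| ∧ (|ρ| : ℝ) ≤ C * X ^ (k - d) ∧
        ∏ i, (x i - y j) = ρ * m.eval (-(y j)) := by
  classical
  set M : ℝ := ∑ i ∈ Finset.range (d + 1), |((m.coeff i : ℤ) : ℝ)| with hMdef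
  have hM0 : 0 ≤ M := Finset.sum_nonneg fun i _ => abs_nonneg _
  have hmc : ∀ i, |((m.coeff i : ℤ) : ℝ)| ≤ M := by
    intro i
    by_cases hi : i ≤ d
    · exact Finset.single_le_sum (f := fun i => |((m.coeff i : ℤ) : ℝ)|)
        (fun i _ => abs_nonneg _) (Finset.mem_range.2 (Nat.lt_succ_of_le hi))
    · have : m.coeff i = 0 := Polynomial.coeff_eq_zero_of_natDegree_lt (by omega)
      rw [this]; simpa using hM0
  have hm0 : m ≠ 0 := hirr.ne_zero
  have hmlc : 1 ≤ |((m.coeff d : ℤ) : ℝ)| := by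
    have : m.coeff d ≠ 0 := by
      rw [← hmdeg]
      exact Polynomial.leadingCoeff_ne_zero.2 hm0
    have h1 : 1 ≤ |m.coeff d| := Int.one_le_abs (by exact_mod_cast this)
    exact_mod_cast h1
  refine ⟨(k + 1) * 2 ^ (k + 1) * (1 + k * M) ^ k, by positivity, ?_⟩
  intro X hX x y hx hy hrel hxy j
  have hX0 : (0:ℝ) ≤ X := le_trans zero_le_one hX
  set P : Polynomial ℤ := ∏ i, (Polynomial.X + Polynomial.C (x i)) with hP
  set Q : Polynomial ℤ := ∏ i, (Polynomial.X + Polynomial.C (y i)) with hQ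
  set f : Polynomial ℤ := P - Q with hfdefn
  -- f(θ) = 0
  have hfθ : Polynomial.aeval θ f = 0 := by
    have h1 : Polynomial.aeval θ P = ∏ i, ((x i : ℂ) + θ) := by
      rw [hP, map_prod]
      refine Finset.prod_congr rfl fun i _ => ?_
      simp [add_comm]
    have h2 : Polynomial.aeval θ Q = ∏ i, ((y i : ℂ) + θ) := by
      rw [hQ, map_prod]
      refine Finset.prod_congr rfl fun i _ => ?_
      simp [add_comm]
    rw [hfdefn, map_sub, h1, h2, hrel, sub_self]
  -- m ∣ f
  have hdvd : m ∣ f := by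
    by_cases hf0 : f = 0
    · rw [hf0]; exact dvd_zero m
    have hint : IsIntegral ℚ θ := hθ.isIntegral
    have hmapirr : Irreducible (m.map (algebraMap ℤ ℚ)) :=
      (hprim.irreducible_iff_irreducible_map_fraction_map).mp hirr
    have hminirr : Irreducible (minpoly ℚ θ) := minpoly.irreducible hint
    have hmin_dvd_m : minpoly ℚ θ ∣ m.map (algebraMap ℤ ℚ) :=
      minpoly.dvd ℚ θ (by rw [Polynomial.aeval_map_algebraMap]; exact hroot)
    have hm_dvd_min : m.map (algebraMap ℤ ℚ) ∣ minpoly ℚ θ :=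
      hminirr.dvd_symm hmapirr hmin_dvd_m
    have hmin_dvd_f : minpoly ℚ θ ∣ f.map (algebraMap ℤ ℚ) :=
      minpoly.dvd ℚ θ (by rw [Polynomial.aeval_map_algebraMap]; exact hfθ)
    have hmap_dvd : m.map (algebraMap ℤ ℚ) ∣ f.map (algebraMap ℤ ℚ) :=
      hm_dvd_min.trans hmin_dvd_f
    have hcontent : (f.content : ℚ) ≠ 0 := by
      exact_mod_cast (Polynomial.content_eq_zero_iff.not.2 hf0)
    have hfmap : f.map (algebraMap ℤ ℚ) =
        Polynomial.C ((f.content : ℤ) : ℚ) * f.primPart.map (algebraMap ℤ ℚ) := by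
      conv_lhs => rw [f.eq_C_content_mul_primPart]
      rw [Polynomial.map_mul, Polynomial.map_C]
      norm_num
    have hunit : IsUnit (Polynomial.C ((f.content : ℤ) : ℚ)) :=
      Polynomial.isUnit_C.2 (Ne.isUnit hcontent)
    have hdvd_pp : m.map (algebraMap ℤ ℚ) ∣ f.primPart.map (algebraMap ℤ ℚ) := by
      rw [hfmap] at hmap_dvd
      exact (IsUnit.dvd_mul_left hunit).mp hmap_dvd
    have := hprim.dvd_of_fraction_map_dvd_fraction_map hdvd_pp
    exact this.trans f.primPart_dvd
  obtain ⟨g, hfg⟩ := hdvd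
  -- evaluations at -(y j)
  have hPeval : P.eval (-(y j)) = ∏ i, (x i - y j) := by
    rw [hP, Polynomial.eval_prod]
    refine Finset.prod_congr rfl fun i _ => ?_
    simp; ring
  have hQeval : Q.eval (-(y j)) = 0 := by
    rw [hQ, Polynomial.eval_prod]
    refine Finset.prod_eq_zero (Finset.mem_univ j) ?_
    simp
  have hfeval : f.eval (-(y j)) = ∏ i, (x i - y j) := by
    rw [hfdefn, Polynomial.eval_sub, hPeval, hQeval, sub_zero]
  set ρ : ℤ := g.eval (-(y j)) with hρ
  have hprodrho : ∏ i, (x i - y j) = ρ * m.eval (-(y j)) := by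
    rw [← hfeval, hfg, Polynomial.eval_mul, hρ]; ring
  have hprodne : ∏ i, (x i - y j) ≠ 0 :=
    Finset.prod_ne_zero_iff.2 fun i _ => sub_ne_zero.2 (hxy i j)
  have hρne : ρ ≠ 0 := by
    intro h
    rw [h, zero_mul] at hprodrho
    exact hprodne hprodrho
  have hρ1 : 1 ≤ |ρ| := Int.one_le_abs hρne
  -- degree facts
  have hf0 : f ≠ 0 := fun h => hprodne (by rw [← hfeval, h, Polynomial.eval_zero])
  have hg0 : g ≠ 0 := fun h => hf0 (by rw [hfg, h, mul_zero])
  have hmonic1 : ∀ i : Fin k, (Polynomial.X + Polynomial.C (x i)).Monic :=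
    fun i => Polynomial.monic_X_add_C _
  have hmonic2 : ∀ i : Fin k, (Polynomial.X + Polynomial.C (y i)).Monic :=
    fun i => Polynomial.monic_X_add_C _
  have hPmonic : P.Monic := Polynomial.monic_prod_of_monic _ _ fun i _ => hmonic1 i
  have hQmonic : Q.Monic := Polynomial.monic_prod_of_monic _ _ fun i _ => hmonic2 i
  have hPdeg : P.natDegree = k := by
    rw [hP, Polynomial.natDegree_prod _ _ fun i _ => (hmonic1 i).ne_zero]
    have : ∀ i : Fin k, (Polynomial.X + Polynomial.C (x i)).natDegree = 1 :=
      fun i => Polynomial.natDegree_X_add_C _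
    rw [Finset.sum_congr rfl fun i _ => this i]
    simp
  have hQdeg : Q.natDegree = k := by
    rw [hQ, Polynomial.natDegree_prod _ _ fun i _ => (hmonic2 i).ne_zero]
    have : ∀ i : Fin k, (Polynomial.X + Polynomial.C (y i)).natDegree = 1 :=
      fun i => Polynomial.natDegree_X_add_C _
    rw [Finset.sum_congr rfl fun i _ => this i]
    simp
  have hfdeg : f.natDegree < k := by
    have hdlt : f.degree < P.degree := by
      refine Polynomial.degree_sub_lt ?_ hPmonic.ne_zero ?_
      · rw [Polynomial.degree_eq_natDegree hPmonic.ne_zero,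
          Polynomial.degree_eq_natDegree hQmonic.ne_zero, hPdeg, hQdeg]
      · rw [hPmonic.leadingCoeff, hQmonic.leadingCoeff]
    have h2 : f.natDegree < P.natDegree := Polynomial.natDegree_lt_natDegree hf0 hdlt
    omega
  have hgdeg : g.natDegree < k - d := by
    have h1 : f.natDegree = m.natDegree + g.natDegree := by
      rw [hfg]; exact Polynomial.natDegree_mul hm0 hg0
    omega
  -- coefficient bound for f
  have hfcoeff : ∀ jj, jj ≤ k → |(((m * g).coeff jj : ℤ) : ℝ)| ≤ 2 ^ (k + 1) * X ^ (k - jj) := by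
    intro jj hjj
    rw [← hfg, hfdefn]
    have h1 := coeff_prodXC_bound k X hX x hx jj
    have h2 := coeff_prodXC_bound k X hX y hy jj
    rw [← hP] at h1
    rw [← hQ] at h2
    rw [Polynomial.coeff_sub]
    push_cast
    push_cast at h1 h2
    calc |(P.coeff jj : ℝ) - (Q.coeff jj : ℝ)| ≤ |(P.coeff jj : ℝ)| + |(Q.coeff jj : ℝ)| :=
          abs_sub _ _
      _ ≤ 2 ^ k * X ^ (k - jj) + 2 ^ k * X ^ (k - jj) := add_le_add h1 h2
      _ = 2 ^ (k + 1) * X ^ (k - jj) := by ring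
  have hgcoeff := quot_coeff_bound k d X (2 ^ (k + 1)) M hX (by positivity) hM0 m g hmdeg
    hmlc hmc hgdeg hfcoeff
  -- final bound on ρ
  refine ⟨ρ, hρ1, ?_, hprodrho⟩
  have hyX : |(-(y j) : ℝ)| ≤ X := by
    rw [abs_neg, abs_of_nonneg (by exact_mod_cast le_trans zero_le_one (hy j).1)]
    exact (hy j).2
  have heval : ρ = ∑ s ∈ Finset.range (k - d), g.coeff s * (-(y j)) ^ s := by
    rw [hρ, Polynomial.eval_eq_sum_range' hgdeg]
  have hbound : |(ρ : ℝ)| ≤ (k + 1) * 2 ^ (k + 1) * (1 + k * M) ^ k * X ^ (k - d) := by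
    rw [heval]
    push_cast
    refine le_trans (Finset.abs_sum_le_sum_abs _ _) ?_
    have hterm : ∀ s ∈ Finset.range (k - d),
        |(g.coeff s : ℝ) * (-(y j : ℝ)) ^ s| ≤
          2 ^ (k + 1) * (1 + k * M) ^ k * X ^ (k - d) := by
      intro s hs
      have hsk : s < k - d := Finset.mem_range.1 hs
      rw [abs_mul, abs_pow]
      have h1 : |(g.coeff s : ℝ)| ≤ 2 ^ (k + 1) * (1 + k * M) ^ (k - d - s) * X ^ (k - d - s) :=
        hgcoeff s
      have h2 : |(-(y j) : ℝ)| ^ s ≤ X ^ s := pow_le_pow_left₀ (abs_nonneg _) hyX s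
      have h3 : (0:ℝ) ≤ |(-(y j) : ℝ)| ^ s := by positivity
      calc |(g.coeff s : ℝ)| * |(-(y j) : ℝ)| ^ s
          ≤ (2 ^ (k + 1) * (1 + k * M) ^ (k - d - s) * X ^ (k - d - s)) * X ^ s :=
            mul_le_mul h1 h2 h3 (by positivity)
        _ = 2 ^ (k + 1) * (1 + k * M) ^ (k - d - s) * X ^ (k - d - s + s) := by
            rw [pow_add]; ring
        _ ≤ 2 ^ (k + 1) * (1 + k * M) ^ k * X ^ (k - d) := by
            have e1 : k - d - s + s = k - d := by omega
            rw [e1]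
            have h1M : (1:ℝ) ≤ 1 + (k:ℝ) * M := by
              have := mul_nonneg (Nat.cast_nonneg (α := ℝ) k) hM0
              linarith
            have e2 : (1 + (k:ℝ) * M) ^ (k - d - s) ≤ (1 + (k:ℝ) * M) ^ k :=
              pow_le_pow_right₀ h1M (by omega)
            have e3 : (0:ℝ) ≤ X ^ (k - d) := by positivity
            exact mul_le_mul_of_nonneg_right
              (mul_le_mul_of_nonneg_left e2 (by positivity)) e3
    calc ∑ s ∈ Finset.range (k - d), |(g.coeff s : ℝ) * (-(y j : ℝ)) ^ s|
        ≤ ∑ _s ∈ Finset.range (k - d), 2 ^ (k + 1) * (1 + k * M) ^ k * X ^ (k - d) :=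
          Finset.sum_le_sum hterm
      _ = (k - d : ℕ) * (2 ^ (k + 1) * (1 + k * M) ^ k * X ^ (k - d)) := by
          rw [Finset.sum_const, Finset.card_range, nsmul_eq_mul]
      _ ≤ (k + 1) * 2 ^ (k + 1) * (1 + k * M) ^ k * X ^ (k - d) := by
          have hkd1 : ((k - d : ℕ) : ℝ) ≤ (k : ℝ) + 1 := by
            have h' : (k - d : ℕ) ≤ k + 1 := by omega
            exact_mod_cast h'
          have hT : (0:ℝ) ≤ 2 ^ (k + 1) * (1 + k * M) ^ k * X ^ (k - d) := by positivity
          calc ((k - d : ℕ) : ℝ) * (2 ^ (k + 1) * (1 + k * M) ^ k * X ^ (k - d))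
              ≤ ((k : ℝ) + 1) * (2 ^ (k + 1) * (1 + k * M) ^ k * X ^ (k - d)) :=
                mul_le_mul_of_nonneg_right hkd1 hT
            _ = (k + 1) * 2 ^ (k + 1) * (1 + k * M) ^ k * X ^ (k - d) := by ring
  calc (|ρ| : ℝ) = |(ρ : ℝ)| := by push_cast; rfl
    _ ≤ (k + 1) * 2 ^ (k + 1) * (1 + k * M) ^ k * X ^ (k - d) := hbound
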